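/- In a minimal-size tree-topology execution of a 2-phase-bounded broadcast protocol covering q_f at the root: every non-root vertex broadcasts at least one message during the execution, and, for any vertex u₁ and its child u₂ (both non-root), the index of the first broadcast of u₂ is strictly smaller than the index of the first broadcast of u₁. -/

import Mathlib

namespace BN

/-- Actions of a broadcast protocol: broadcast `!!m`, reception `?m`, internal `τ`. -/
inductive Act (M : Type) : Type where
  | brd : M → Act M
  | rcv : M → Act M
  | tau : Act M

/-- A broadcast protocol: an initial state and a set of transitions. -/
structure Protocol (Q M : Type) : Type where
  qin : Q
  delta : Set (Q × Act M × Q)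

variable {Q M V : Type}

/-- `q` has an outgoing reception of `m`. -/
def canRecv (P : Protocol Q M) (q : Q) (m : M) : Prop :=
  ∃ q', (q, Act.rcv m, q') ∈ P.delta

/-- One step of the broadcast network semantics over topology `G`,
performed by vertex `v` taking transition `t`. -/
def Step (G : SimpleGraph V) (P : Protocol Q M) (v : V)
    (t : Q × Act M × Q) (L L' : V → Q) : Prop :=
  t ∈ P.delta ∧ L v = t.1 ∧ L' v = t.2.2 ∧
  (match t.2.1 with
   | Act.tau => ∀ u, u ≠ v → L' u = L u
   | Act.brd m =>
       (∀ u, G.Adj v u →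
          ((L u, Act.rcv m, L' u) ∈ P.delta ∨ (¬ canRecv P (L u) m ∧ L' u = L u))) ∧
       (∀ u, u ≠ v → ¬ G.Adj v u → L' u = L u)
   | Act.rcv _ => False)

def StepAny (G : SimpleGraph V) (P : Protocol Q M) (L L' : V → Q) : Prop :=
  ∃ v t, Step G P v t L L'

def Reach (G : SimpleGraph V) (P : Protocol Q M) : (V → Q) → (V → Q) → Prop :=
  Relation.ReflTransGen (StepAny G P)

def initConf (P : Protocol Q M) : V → Q := fun _ => P.qin

/-- `qf` is coverable over the class of all (finite) graph topologies. -/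
def Coverable (P : Protocol Q M) (qf : Q) : Prop :=
  ∃ (V' : Type) (_ : Fintype V') (G : SimpleGraph V') (L : V' → Q),
    Reach G P (initConf P) L ∧ ∃ v, L v = qf

/-- A tree topology: a prefix-closed finite set of words over ℕ containing ε. -/
structure TreeTopo : Type where
  verts : Finset (List ℕ)
  nil_mem : ([] : List ℕ) ∈ verts
  prefixClosed : ∀ w ∈ verts, ∀ w' : List ℕ, w' <+: w → w' ∈ verts

abbrev TreeTopo.Vert (T : TreeTopo) : Type := {w : List ℕ // w ∈ T.verts}

def TreeTopo.root (T : TreeTopo) : T.Vert := ⟨[], T.nil_mem⟩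

/-- The graph of a tree topology: each word `w ++ [x]` is adjacent to its parent `w`. -/
def TreeTopo.graph (T : TreeTopo) : SimpleGraph T.Vert where
  Adj u v := (∃ x : ℕ, (v : List ℕ) = (u : List ℕ) ++ [x]) ∨
             (∃ x : ℕ, (u : List ℕ) = (v : List ℕ) ++ [x])
  symm := by constructor; intro u v h; exact h.symm
  loopless := by
    constructor
    intro u h
    rcases h with ⟨x, hx⟩ | ⟨x, hx⟩ <;> simpa using congrArg List.length hx

def CoverableWith (T : TreeTopo) (P : Protocol Q M) (qf : Q) : Prop :=
  ∃ L : T.Vert → Q, Reach T.graph P (initConf P) L ∧ ∃ u, L u = qf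

def CoverableTreeRoot (P : Protocol Q M) (qf : Q) : Prop :=
  ∃ (T : TreeTopo) (L : T.Vert → Q),
    Reach T.graph P (initConf P) L ∧ L T.root = qf

/-- `(T, lam)` is the unfolding of graph `G` at vertex `v` to depth `n`. -/
structure IsUnfolding {V : Type} (G : SimpleGraph V) (v : V) (n : ℕ)
    (T : TreeTopo) (lam : T.Vert → V) : Prop where
  root_lbl : lam T.root = v
  depth_le : ∀ w ∈ T.verts, w.length ≤ n
  root_children :
    Set.BijOn lam {u : T.Vert | ∃ x : ℕ, (u : List ℕ) = [x]} (G.neighborSet v)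
  children : ∀ (u : T.Vert) (w : List ℕ) (hw : w ∈ T.verts) (x : ℕ),
      (u : List ℕ) = w ++ [x] → (u : List ℕ).length < n →
      Set.BijOn lam {u' : T.Vert | ∃ y : ℕ, (u' : List ℕ) = (u : List ℕ) ++ [y]}
        (G.neighborSet (lam u) \ {lam ⟨w, hw⟩})
  no_deep : ∀ u : T.Vert, n ≤ (u : List ℕ).length →
      ∀ x : ℕ, (u : List ℕ) ++ [x] ∉ T.verts

/-- Phase tags annotating states: `zero` (phase 0), broadcast phase `j`, reception phase `j`. -/
inductive PTag : Type where
  | zero : PTag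
  | bph : ℕ → PTag
  | rph : ℕ → PTag
deriving DecidableEq

def bOf : ℕ → PTag
  | 0 => .zero
  | j+1 => .bph (j+1)

def rOf : ℕ → PTag
  | 0 => .zero
  | j+1 => .rph (j+1)

/-- `φ` witnesses that `P` is `k`-phase-bounded. -/
def IsPhaseAssignment (k : ℕ) (P : Protocol Q M) (φ : Q → PTag) : Prop :=
  φ P.qin = .zero ∧
  (∀ q : Q, φ q = .zero ∨ ∃ j, 1 ≤ j ∧ j ≤ k ∧ (φ q = .bph j ∨ φ q = .rph j)) ∧
  ∀ t ∈ P.delta,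
    (match t.2.1 with
     | Act.tau => φ t.1 = φ t.2.2
     | Act.brd _ =>
         (∃ j, 1 ≤ j ∧ j ≤ k ∧ φ t.1 = .bph j ∧ φ t.2.2 = .bph j) ∨
         (∃ i, i < k ∧ φ t.1 = rOf i ∧ φ t.2.2 = .bph (i+1))
     | Act.rcv _ =>
         (∃ j, 1 ≤ j ∧ j ≤ k ∧ φ t.1 = .rph j ∧ φ t.2.2 = .rph j) ∨
         (∃ i, i < k ∧ φ t.1 = bOf i ∧ φ t.2.2 = .rph (i+1)) ∨
         (1 ≤ k ∧ φ t.1 = .bph k ∧ φ t.2.2 = .rph k))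

def IsPhaseBounded (k : ℕ) (P : Protocol Q M) : Prop :=
  ∃ φ : Q → PTag, IsPhaseAssignment k P φ

/-- The `k`-unfolding `Pₖ` of a protocol `P`. -/
def unfoldP (P : Protocol Q M) (k : ℕ) : Protocol (Q × PTag) M where
  qin := (P.qin, .zero)
  delta :=
    {t | ∃ q p, (q, Act.tau, p) ∈ P.delta ∧ t = ((q, .zero), Act.tau, (p, .zero))} ∪
    {t | ∃ q p α j, 1 ≤ j ∧ j ≤ k ∧ (q, α, p) ∈ P.delta ∧
        (α = Act.tau ∨ ∃ m, α = Act.rcv m) ∧ t = ((q, .rph j), α, (p, .rph j))} ∪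
    {t | ∃ q p α j, 1 ≤ j ∧ j ≤ k ∧ (q, α, p) ∈ P.delta ∧
        (α = Act.tau ∨ ∃ m, α = Act.brd m) ∧ t = ((q, .bph j), α, (p, .bph j))} ∪
    {t | ∃ q p m j, j < k ∧ (q, Act.brd m, p) ∈ P.delta ∧
        t = ((q, rOf j), Act.brd m, (p, .bph (j+1)))} ∪
    {t | ∃ q p m j, j < k ∧ (q, Act.rcv m, p) ∈ P.delta ∧
        t = ((q, bOf j), Act.rcv m, (p, .rph (j+1)))} ∪
    {t | ∃ q p m, 1 ≤ k ∧ (q, Act.rcv m, p) ∈ P.delta ∧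
        t = ((q, .bph k), Act.rcv m, (p, .rph k))}

/-- Star topology: root `none` adjacent to every leaf `some i`, no other edges. -/
def starGraph (ι : Type) : SimpleGraph (Option ι) where
  Adj u v := (u = none ∧ v ≠ none) ∨ (v = none ∧ u ≠ none)
  symm := by constructor; intro u v h; tauto
  loopless := by constructor; intro u h; tauto

/-- For a 1-phase-bounded protocol with witness `φ`, `Q^b = Q₀ ∪ Q₁^b`. -/
def Qb (φ : Q → PTag) : Set Q := {q | φ q = .zero ∨ φ q = .bph 1}

/-- The set component of the broadcast-print of a star configuration. -/
def bprintSet {ι : Type} (φ : Q → PTag) (L : Option ι → Q) : Set Q :=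
  {q | q ∈ Qb φ ∧ ∃ i, L (some i) = q}

/-- The abstract transition relation `⇒` on broadcast-prints. -/
def PrintStep (P : Protocol Q M) (φ : Q → PTag) :
    (Q × Set Q) → (Q × Set Q) → Prop := fun pr pr' =>
  ∃ (ι : Type) (_ : Fintype ι) (L L' : Option ι → Q),
    StepAny (starGraph ι) P L L' ∧ L none ∈ Qb φ ∧ L' none ∈ Qb φ ∧
    pr = (L none, bprintSet φ L) ∧ pr' = (L' none, bprintSet φ L')

/-- Line topology on `Fin ℓ`: consecutive vertices are adjacent. -/
def lineGraph (ℓ : ℕ) : SimpleGraph (Fin ℓ) where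
  Adj i j := (i : ℕ) + 1 = (j : ℕ) ∨ (j : ℕ) + 1 = (i : ℕ)
  symm := by constructor; intro i j h; tauto
  loopless := by constructor; intro i h; rcases h with h | h <;> omega

/-- `t` is a broadcast transition. -/
def IsBrdT (t : Q × Act M × Q) : Prop := ∃ m, t.2.1 = Act.brd m

/-- In the execution described by `vs, ts` of length `n`, `i` is the first index at
which vertex `u` performs a broadcast. -/
def IsFirstBrd {V' : Type} (vs : ℕ → V') (ts : ℕ → Q × Act M × Q) (n : ℕ)
    (u : V') (i : ℕ) : Prop :=
  i < n ∧ vs i = u ∧ IsBrdT (ts i) ∧ ∀ j < i, vs j = u → ¬ IsBrdT (ts j)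

/-- Every transition of `u` occurs no later than every broadcast of `w`
(i.e. lastBroadcast(u) ≤ firstBroadcast(w)). -/
def BrdOrder {V' : Type} (n : ℕ) (vs : ℕ → V') (ts : ℕ → Q × Act M × Q)
    (u w : V') : Prop :=
  ∀ j j', j < n → j' < n → vs j = u → vs j' = w → IsBrdT (ts j') → j ≤ j'

/-- One application of the pair-coverability operator. -/
def pairStep (P : Protocol Q M) (S : Set (Q × Q)) : Set (Q × Q) :=
  S ∪
  {p | ∃ p₁, (p₁, p.2) ∈ S ∧ (p₁, Act.tau, p.1) ∈ P.delta} ∪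
  {p | ∃ p₂, (p.1, p₂) ∈ S ∧ (p₂, Act.tau, p.2) ∈ P.delta} ∪
  {p | ∃ p₁ p₂ m, (p₁, p₂) ∈ S ∧ (p₂, Act.brd m, p.2) ∈ P.delta ∧
      (p₁, Act.rcv m, p.1) ∈ P.delta} ∪
  {p | ∃ p₂ m, (p.1, p₂) ∈ S ∧ (p₂, Act.brd m, p.2) ∈ P.delta ∧ ¬ canRecv P p.1 m} ∪
  {p | p.1 = P.qin ∧ ∃ q', (p.2, q') ∈ S}

/-- The iteration `S₀ ⊆ S₁ ⊆ …` of the pair-coverability operator. -/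
def Siter (P : Protocol Q M) : ℕ → Set (Q × Q)
  | 0 => {(P.qin, P.qin)}
  | i+1 => pairStep P (Siter P i)


/-! ### Auxiliary material for Statement 10 -/

section Aux

lemma prefix_snoc {l m : List ℕ} {a : ℕ} (h : l <+: m ++ [a]) :
    l <+: m ∨ l = m ++ [a] := by
  obtain ⟨t, ht⟩ := h
  rcases List.eq_nil_or_concat t with rfl | ⟨t', b, rfl⟩
  · right; simpa using ht
  · left
    have h2 : (l ++ t') ++ [b] = m ++ [a] := by
      simpa [List.concat_eq_append, List.append_assoc] using ht
    exact ⟨t', (List.append_inj' h2 rfl).1⟩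

lemma adj_out {T : TreeTopo} {a v : T.Vert} (h : T.graph.Adj a v)
    {wp : List ℕ} {x₀ : ℕ} (ha : wp ++ [x₀] <+: (a : List ℕ))
    (hv : ¬ wp ++ [x₀] <+: (v : List ℕ)) :
    (v : List ℕ) = wp ∧ (a : List ℕ) = wp ++ [x₀] := by
  rcases h with ⟨y, hy⟩ | ⟨y, hy⟩
  · exact absurd (ha.trans (hy ▸ List.prefix_append _ _)) hv
  · rw [hy] at ha
    rcases prefix_snoc ha with h1 | h1
    · exact absurd h1 hv
    · have h2 := List.append_inj' h1 rfl
      exact ⟨h2.1.symm, by rw [hy, ← h2.1, ← h2.2]⟩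

/-- Remove the subtree rooted at `w₀` from a tree topology. -/
def delTree (T : TreeTopo) (w₀ : List ℕ) (hne : w₀ ≠ []) : TreeTopo where
  verts := T.verts.filter (fun w => ¬ w₀ <+: w)
  nil_mem := by
    simp only [Finset.mem_filter]
    exact ⟨T.nil_mem, fun hp => hne (List.prefix_nil.mp hp)⟩
  prefixClosed := by
    intro w hw w' hp
    simp only [Finset.mem_filter] at hw ⊢
    exact ⟨T.prefixClosed w hw.1 w' hp, fun hp' => hw.2 (hp'.trans hp)⟩

/-- The canonical embedding of vertices of `delTree T w₀` into those of `T`. -/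
def delEmb (T : TreeTopo) (w₀ : List ℕ) (hne : w₀ ≠ []) :
    (delTree T w₀ hne).Vert → T.Vert :=
  fun v => ⟨v.1, (Finset.mem_filter.mp v.2).1⟩

lemma delEmb_not_pre {T : TreeTopo} {w₀ : List ℕ} {hne : w₀ ≠ []}
    (v : (delTree T w₀ hne).Vert) :
    ¬ w₀ <+: ((delEmb T w₀ hne v : T.Vert) : List ℕ) :=
  (Finset.mem_filter.mp v.2).2

lemma del_adj {T : TreeTopo} {w₀ : List ℕ} {hne : w₀ ≠ []}
    {u v : (delTree T w₀ hne).Vert} :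
    (delTree T w₀ hne).graph.Adj u v ↔
      T.graph.Adj (delEmb T w₀ hne u) (delEmb T w₀ hne v) := Iff.rfl

/-- A canonical "response" of a state to a broadcast of `m`. -/
noncomputable def resp (P : Protocol Q M) (m : M) (q : Q) : Q :=
  @dite Q (canRecv P q m) (Classical.propDecidable _) (fun h => h.choose) (fun _ => q)

lemma resp_spec (P : Protocol Q M) (m : M) (q : Q) :
    (q, Act.rcv m, resp P m q) ∈ P.delta ∨
      (¬ canRecv P q m ∧ resp P m q = q) := by
  unfold resp
  split
  next h => exact Or.inl h.choose_spec
  next h => exact Or.inr ⟨h, rfl⟩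

lemma step_vertex_cases {G : SimpleGraph V} {P : Protocol Q M} {a : V}
    {t : Q × Act M × Q} {L L' : V → Q} (h : Step G P a t L L') (v : V) :
    L' v = L v ∨
    (v = a ∧ L v = t.1 ∧ L' v = t.2.2 ∧
      (t.2.1 = Act.tau ∨ ∃ m, t.2.1 = Act.brd m)) ∨
    (v ≠ a ∧ ∃ m, t.2.1 = Act.brd m ∧ G.Adj a v ∧
      (L v, Act.rcv m, L' v) ∈ P.delta) := by
  classical
  obtain ⟨q, α, q'⟩ := t
  obtain ⟨ht, h1, h2, h3⟩ := h
  by_cases hv : v = a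
  · subst hv
    cases α with
    | tau => exact Or.inr (Or.inl ⟨rfl, h1, h2, Or.inl rfl⟩)
    | brd m => exact Or.inr (Or.inl ⟨rfl, h1, h2, Or.inr ⟨m, rfl⟩⟩)
    | rcv m => exact h3.elim
  · cases α with
    | tau => exact Or.inl (h3 v hv)
    | brd m =>
      by_cases hadj : G.Adj a v
      · rcases h3.1 v hadj with hrc | ⟨_, he⟩
        · exact Or.inr (Or.inr ⟨hv, m, rfl, hadj, hrc⟩)
        · exact Or.inl he
      · exact Or.inl (h3.2 v hv hadj)
    | rcv m => exact h3.elim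

/-- "Good" phase tags for 2-phase-bounded protocols: tags reachable after a first
broadcast. -/
def GoodT (φ : Q → PTag) (q : Q) : Prop :=
  φ q = .bph 1 ∨ φ q = .bph 2 ∨ φ q = .rph 2

lemma phase_brd {P : Protocol Q M} {φ : Q → PTag}
    (hφ : IsPhaseAssignment 2 P φ) {t : Q × Act M × Q}
    (ht : t ∈ P.delta) {m : M} (hm : t.2.1 = Act.brd m) :
    (φ t.2.2 = .bph 1 ∨ φ t.2.2 = .bph 2) ∧ φ t.1 ≠ .rph 2 := by
  obtain ⟨q, α, q'⟩ := t
  have hm' : α = Act.brd m := hm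
  subst hm'
  have h := hφ.2.2 _ ht
  rcases h with ⟨j, hj1, hj2, hq, hq'⟩ | ⟨i, hi, hq, hq'⟩
  · constructor
    · interval_cases j
      · exact Or.inl hq'
      · exact Or.inr hq'
    · rw [hq]; simp
  · constructor
    · interval_cases i
      · exact Or.inl hq'
      · exact Or.inr hq'
    · rw [hq]
      interval_cases i <;> simp [rOf]

lemma phase_tau {P : Protocol Q M} {φ : Q → PTag}
    (hφ : IsPhaseAssignment 2 P φ) {t : Q × Act M × Q}
    (ht : t ∈ P.delta) (hm : t.2.1 = Act.tau) :
    φ t.1 = φ t.2.2 := by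
  obtain ⟨q, α, q'⟩ := t
  have hm' : α = Act.tau := hm
  subst hm'
  exact hφ.2.2 _ ht

lemma phase_rcv {P : Protocol Q M} {φ : Q → PTag}
    (hφ : IsPhaseAssignment 2 P φ) {t : Q × Act M × Q}
    (ht : t ∈ P.delta) {m : M} (hm : t.2.1 = Act.rcv m)
    (hg : GoodT φ t.1) : φ t.2.2 = .rph 2 := by
  obtain ⟨q, α, q'⟩ := t
  have hm' : α = Act.rcv m := hm
  subst hm'
  have h := hφ.2.2 _ ht
  rcases h with ⟨j, hj1, hj2, hq, hq'⟩ | ⟨i, hi, hq, hq'⟩ | ⟨_, hq, hq'⟩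
  · rcases hg with hg | hg | hg
    · rw [hq] at hg; exact absurd hg (by simp)
    · rw [hq] at hg; exact absurd hg (by simp)
    · rw [hq] at hg
      injection hg with hg'
      rw [hq', hg']
  · interval_cases i
    · rcases hg with hg | hg | hg <;>
        (rw [hq] at hg; exact absurd hg (by simp [bOf]))
    · exact hq'
  · exact hq'

lemma good_step {G : SimpleGraph V} {P : Protocol Q M} {φ : Q → PTag}
    (hφ : IsPhaseAssignment 2 P φ) {a : V} {t : Q × Act M × Q} {L L' : V → Q}
    (h : Step G P a t L L') (v : V) (hg : GoodT φ (L v)) : GoodT φ (L' v) := by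
  rcases step_vertex_cases h v with he | ⟨_, h1, h2, hα⟩ | ⟨_, m, hm, _, hrc⟩
  · rw [he]; exact hg
  · rcases hα with hτ | ⟨m, hm⟩
    · have heq : φ (L' v) = φ (L v) := by
        rw [h2, ← phase_tau hφ h.1 hτ, ← h1]
      unfold GoodT at hg ⊢
      rw [heq]; exact hg
    · rcases (phase_brd hφ h.1 hm).1 with hb | hb
      · rw [h2]; exact Or.inl hb
      · rw [h2]; exact Or.inr (Or.inl hb)
  · exact Or.inr (Or.inr (phase_rcv hφ hrc rfl hg))

lemma bad_step {G : SimpleGraph V} {P : Protocol Q M} {φ : Q → PTag}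
    (hφ : IsPhaseAssignment 2 P φ) {a : V} {t : Q × Act M × Q} {L L' : V → Q}
    (h : Step G P a t L L') (v : V) (hb : φ (L v) = .rph 2) :
    φ (L' v) = .rph 2 := by
  rcases step_vertex_cases h v with he | ⟨_, h1, h2, hα⟩ | ⟨_, m, hm, _, hrc⟩
  · rw [he]; exact hb
  · rcases hα with hτ | ⟨m, hm⟩
    · have heq := phase_tau hφ h.1 hτ
      rw [h2, ← heq, ← h1]; exact hb
    · exact absurd (h1 ▸ hb) (phase_brd hφ h.1 hm).2
  · exact phase_rcv hφ hrc rfl (Or.inr (Or.inr hb))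

/-- The key deletion lemma: if the vertex `wp ++ [x₀]` together with its parent `p = wp`
satisfies the two compensation hypotheses, the whole subtree rooted at `wp ++ [x₀]`
can be deleted while preserving the run outside (up to the cut time `j` at `p`). -/
lemma sim {Q M : Type} (P : Protocol Q M) (T : TreeTopo)
    (n : ℕ) (Ls : ℕ → T.Vert → Q) (vs : ℕ → T.Vert) (ts : ℕ → Q × Act M × Q)
    (h0 : Ls 0 = initConf P)
    (hstep : ∀ i < n, Step T.graph P (vs i) (ts i) (Ls i) (Ls (i+1)))
    (wp : List ℕ) (x₀ : ℕ) (p : T.Vert) (hp : (p : List ℕ) = wp)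
    (hne : wp ++ [x₀] ≠ [])
    (j : ℕ)
    (H1 : ∀ i < n, i < j → wp ++ [x₀] <+: (vs i : List ℕ) → Ls (i+1) p = Ls i p)
    (H2 : ∀ i, j ≤ i → i < n → vs i = p → ∀ m, (ts i).2.1 ≠ Act.brd m) :
    ∃ L' : (delTree T (wp ++ [x₀]) hne).Vert → Q,
      Reach (delTree T (wp ++ [x₀]) hne).graph P (initConf P) L' ∧
      ∀ v : (delTree T (wp ++ [x₀]) hne).Vert,
        ((v : List ℕ) ≠ wp ∨ n ≤ j) →
        L' v = Ls n (delEmb T (wp ++ [x₀]) hne v) := by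
  classical
  set w₀ := wp ++ [x₀] with hw₀
  set T' := delTree T w₀ hne with hT'
  set emb := delEmb T w₀ hne with hemb
  have main : ∀ i, i ≤ n → ∃ L' : T'.Vert → Q,
      Reach T'.graph P (initConf P) L' ∧
      ∀ v : T'.Vert, ((v : List ℕ) ≠ wp ∨ i ≤ j) → L' v = Ls i (emb v) := by
    intro i
    induction i with
    | zero =>
      intro _
      exact ⟨initConf P, Relation.ReflTransGen.refl, fun v _ => by rw [h0]; rfl⟩
    | succ i ih =>
      intro hi1
      have hi : i < n := hi1
      obtain ⟨L', hR, hI⟩ := ih (Nat.le_of_succ_le hi1)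
      have hs := hstep i hi
      have weaken : ∀ v : T'.Vert,
          ((v : List ℕ) ≠ wp ∨ i + 1 ≤ j) → ((v : List ℕ) ≠ wp ∨ i ≤ j) := by
        rintro v (h | h)
        · exact Or.inl h
        · exact Or.inr (by omega)
      by_cases hA : w₀ <+: (vs i : List ℕ)
      · -- the acting vertex lies in the deleted subtree: skip the step
        refine ⟨L', hR, ?_⟩
        intro v hv
        rw [hI v (weaken v hv)]
        rcases step_vertex_cases hs (emb v) with he | ⟨heq, _⟩ | ⟨_, m, hm, hadj, _⟩
        · exact he.symm
        · refine absurd ?_ (delEmb_not_pre v)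
          show w₀ <+: ((emb v : T.Vert) : List ℕ)
          rw [heq]; exact hA
        · have hout := adj_out hadj hA (delEmb_not_pre v)
          rcases hv with hv | hv
          · exact absurd hout.1 hv
          · have hev : emb v = p := Subtype.ext (hout.1.trans hp.symm)
            rw [hev]
            exact (H1 i hi (by omega) hA).symm
      · -- the acting vertex survives
        set a' : T'.Vert := ⟨(vs i : List ℕ),
          Finset.mem_filter.mpr ⟨(vs i).2, hA⟩⟩ with ha'
        have hembA : emb a' = vs i := Subtype.ext rfl
        obtain ⟨⟨tq, tα, tq'⟩, hts⟩ : ∃ t, ts i = t := ⟨ts i, rfl⟩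
        rw [hts] at hs
        obtain ⟨hδ, hsrcO, hdstO, hmatch⟩ := hs
        have hvne : ∀ v : T'.Vert, v ≠ a' → emb v ≠ vs i := by
          intro v hv h
          apply hv
          apply Subtype.ext
          show (v : List ℕ) = ((vs i : T.Vert) : List ℕ)
          exact congrArg Subtype.val h
        cases tα with
        | rcv m => exact hmatch.elim
        | tau =>
          by_cases hk : ((vs i : List ℕ) ≠ wp ∨ i < j)
          · -- mirror the internal step
            have hsrc' : L' a' = tq := by
              have h1 := hI a' (by
                rcases hk with hk | hk
                · exact Or.inl hk
                · exact Or.inr (by omega))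
              rw [hembA] at h1
              rw [h1]; exact hsrcO
            refine ⟨fun v => if v = a' then tq' else L' v,
              hR.tail ⟨a', (tq, Act.tau, tq'),
                hδ, hsrc', if_pos rfl, fun u hu => if_neg hu⟩, ?_⟩
            intro v hv
            by_cases hva : v = a'
            · subst hva
              simp only [if_pos rfl]
              rw [hembA]
              exact hdstO.symm
            · simp only [if_neg hva]
              rw [hI v (weaken v hv)]
              exact (hmatch (emb v) (hvne v hva)).symm
          · -- the parent acting internally after the cut: skip
            push_neg at hk
            refine ⟨L', hR, ?_⟩
            intro v hv
            have hvw : (v : List ℕ) ≠ wp := by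
              rcases hv with hv | hv
              · exact hv
              · omega
            rw [hI v (Or.inl hvw)]
            have : emb v ≠ vs i := by
              intro h
              exact hvw (by rw [show (v : List ℕ) = ((emb v : T.Vert) : List ℕ) from rfl, h, hk.1])
            exact (hmatch (emb v) this).symm
        | brd m =>
          by_cases hk : ((vs i : List ℕ) ≠ wp ∨ i < j)
          · -- mirror the broadcast step
            have hsrc' : L' a' = tq := by
              have h1 := hI a' (by
                rcases hk with hk | hk
                · exact Or.inl hk
                · exact Or.inr (by omega))
              rw [hembA] at h1
              rw [h1]; exact hsrcO
            set L'' : T'.Vert → Q := fun v =>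
              if v = a' then tq'
              else if T.graph.Adj (vs i) (emb v) then
                (if ((v : List ℕ) ≠ wp ∨ i + 1 ≤ j) then Ls (i+1) (emb v)
                 else resp P m (L' v))
              else L' v with hL''
            have hstep' : Step T'.graph P a' (tq, Act.brd m, tq') L' L'' := by
              refine ⟨hδ, hsrc', by simp only [hL'', if_pos rfl], ?_, ?_⟩
              · intro u hadj
                have hune : u ≠ a' := hadj.ne'
                have hadjT : T.graph.Adj (vs i) (emb u) := by
                  rw [← hembA]; exact del_adj.mp hadj
                simp only [hL'', if_neg hune, if_pos hadjT]
                by_cases hc : ((u : List ℕ) ≠ wp ∨ i + 1 ≤ j)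
                · rw [if_pos hc]
                  have hIu := hI u (weaken u hc)
                  rcases hmatch.1 (emb u) hadjT with hrc | ⟨hcr, heq⟩
                  · left; rw [hIu]; exact hrc
                  · right
                    rw [hIu]
                    exact ⟨hcr, heq⟩
                · rw [if_neg hc]
                  exact resp_spec P m (L' u)
              · intro u hu hnadj
                have hnadjT : ¬ T.graph.Adj (vs i) (emb u) := by
                  rw [← hembA]; exact fun h => hnadj (del_adj.mpr h)
                simp only [hL'', if_neg hu, if_neg hnadjT]
            refine ⟨L'', hR.tail ⟨a', (tq, Act.brd m, tq'), hstep'⟩, ?_⟩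
            intro v hv
            by_cases hva : v = a'
            · subst hva
              simp only [hL'', if_pos rfl]
              rw [hembA]
              exact hdstO.symm
            · by_cases hadj : T.graph.Adj (vs i) (emb v)
              · simp only [hL'', if_neg hva, if_pos hadj, if_pos hv]
              · simp only [hL'', if_neg hva, if_neg hadj]
                rw [hI v (weaken v hv)]
                exact (hmatch.2 (emb v) (hvne v hva) hadj).symm
          · -- the parent would broadcast after the cut: impossible by H2
            push_neg at hk
            have hvp : vs i = p := Subtype.ext (by rw [hk.1, hp])
            exact absurd (by rw [hts]) (H2 i hk.2 hi hvp m)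
  obtain ⟨L', hR, hI⟩ := main n le_rfl
  exact ⟨L', hR, hI⟩

lemma min_contra {Q M : Type} (P : Protocol Q M) (qf : Q) (T : TreeTopo)
    (hmin : ∀ T' : TreeTopo, CoverableWith T' P qf → T.verts.card ≤ T'.verts.card)
    (w₀ : List ℕ) (hne : w₀ ≠ []) (hw : w₀ ∈ T.verts)
    (hcov : CoverableWith (delTree T w₀ hne) P qf) : False := by
  have h1 := hmin _ hcov
  have h2 : (delTree T w₀ hne).verts ⊂ T.verts := by
    refine (Finset.ssubset_iff_of_subset (Finset.filter_subset _ _)).mpr ⟨w₀, hw, ?_⟩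
    simp [delTree, hw, List.prefix_refl]
  have h3 := Finset.card_lt_card h2
  omega

end Aux

/-- in a minimal tree execution of a 2-phase-bounded protocol covering
`qf` at the root, every non-root vertex broadcasts, and children broadcast strictly
before their parents. -/
theorem minimal_tree_broadcast_order {Q M : Type} (P : Protocol Q M)
    (φ : Q → PTag) (hφ : IsPhaseAssignment 2 P φ) (qf : Q)
    (T : TreeTopo) (n : ℕ) (Ls : ℕ → T.Vert → Q) (vs : ℕ → T.Vert)
    (ts : ℕ → Q × Act M × Q)
    (h0 : Ls 0 = initConf P)
    (hstep : ∀ i < n, Step T.graph P (vs i) (ts i) (Ls i) (Ls (i+1)))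
    (hf : Ls n T.root = qf)
    (hmin : ∀ T' : TreeTopo, CoverableWith T' P qf → T.verts.card ≤ T'.verts.card) :
    (∀ u : T.Vert, u ≠ T.root → ∃ i, i < n ∧ vs i = u ∧ IsBrdT (ts i)) ∧
    (∀ (u₁ u₂ : T.Vert) (x : ℕ), u₁ ≠ T.root →
      (u₂ : List ℕ) = (u₁ : List ℕ) ++ [x] →
      ∀ i₁ i₂, IsFirstBrd vs ts n u₁ i₁ → IsFirstBrd vs ts n u₂ i₂ → i₂ < i₁) := by
  classical
  constructor
  · -- Part 1: every non-root vertex broadcasts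
    intro u hu
    by_contra hno
    push_neg at hno
    have hul : (u : List ℕ) ≠ [] := fun h => hu (Subtype.ext h)
    set wp := (u : List ℕ).dropLast with hwp
    set x₀ := (u : List ℕ).getLast hul with hx₀
    have hw0 : wp ++ [x₀] = (u : List ℕ) := List.dropLast_append_getLast hul
    have hpmem : wp ∈ T.verts := T.prefixClosed _ u.2 wp (List.dropLast_prefix _)
    have hne : wp ++ [x₀] ≠ [] := by simp
    have hplen : ¬ (wp ++ [x₀] <+: ((⟨wp, hpmem⟩ : T.Vert) : List ℕ)) := by
      intro h
      have hlen : (wp ++ [x₀]).length ≤ wp.length := h.length_le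
      simp at hlen
    have H1 : ∀ i < n, i < n → wp ++ [x₀] <+: (vs i : List ℕ) →
        Ls (i+1) ⟨wp, hpmem⟩ = Ls i ⟨wp, hpmem⟩ := by
      intro i hi _ hpre
      rcases step_vertex_cases (hstep i hi) (⟨wp, hpmem⟩ : T.Vert) with
        he | ⟨heq, _⟩ | ⟨_, m, hm, hadj, _⟩
      · exact he
      · rw [← heq] at hpre
        exact absurd hpre hplen
      · have hout := adj_out hadj hpre hplen
        have hvu : vs i = u := Subtype.ext (by rw [hout.2, hw0])
        exact absurd ⟨m, hm⟩ (hno i hi hvu)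
    obtain ⟨L', hR, hI⟩ := sim P T n Ls vs ts h0 hstep wp x₀ ⟨wp, hpmem⟩ rfl hne n H1
      (fun i h1 h2 _ _ => absurd (lt_of_le_of_lt h1 h2) (lt_irrefl _))
    have hroot : L' ⟨[], (delTree T (wp ++ [x₀]) hne).nil_mem⟩ = qf := by
      rw [hI _ (Or.inr le_rfl)]
      have hr : delEmb T (wp ++ [x₀]) hne
          ⟨[], (delTree T (wp ++ [x₀]) hne).nil_mem⟩ = T.root := Subtype.ext rfl
      rw [hr, hf]
    exact (min_contra P qf T hmin (wp ++ [x₀]) hne (by rw [hw0]; exact u.2)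
      ⟨L', hR, _, hroot⟩).elim
  · -- Part 2: children broadcast strictly before their parents
    intro u₁ u₂ x hu₁ hu₂x i₁ i₂ hF1 hF2
    by_contra hcon
    push_neg at hcon
    have hne12 : u₁ ≠ u₂ := by
      intro h
      have hl := congrArg (fun v : T.Vert => (v : List ℕ).length) h
      simp [hu₂x] at hl
    have hi12 : i₁ < i₂ := by
      cases Nat.lt_or_ge i₁ i₂ with
      | inl h => exact h
      | inr h =>
        have heq : i₁ = i₂ := le_antisymm hcon h
        have : u₁ = u₂ := by rw [← hF1.2.1, heq, hF2.2.1]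
        exact absurd this hne12
    have hne : (u₁ : List ℕ) ++ [x] ≠ [] := by simp
    have hplen : ¬ ((u₁ : List ℕ) ++ [x] <+: (u₁ : List ℕ)) := by
      intro h
      have hlen : ((u₁ : List ℕ) ++ [x]).length ≤ (u₁ : List ℕ).length := h.length_le
      simp at hlen
    have hw : (u₁ : List ℕ) ++ [x] ∈ T.verts := by rw [← hu₂x]; exact u₂.2
    have hrootne : ([] : List ℕ) ≠ (u₁ : List ℕ) :=
      fun h => hu₁ (Subtype.ext h.symm)
    by_cases hex : ∃ i, i < n ∧
        ((u₁ : List ℕ) ++ [x]) <+: ((vs i : T.Vert) : List ℕ) ∧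
        Ls (i+1) u₁ ≠ Ls i u₁
    · -- the subtree at u₂ eventually affects u₁
      set j := Nat.find hex with hj
      obtain ⟨hjn, hjpre, hjch⟩ := Nat.find_spec hex
      have H1 : ∀ i < n, i < j → (u₁ : List ℕ) ++ [x] <+: (vs i : List ℕ) →
          Ls (i+1) u₁ = Ls i u₁ := by
        intro i hi hij hpre
        by_contra hch
        exact Nat.find_min hex hij ⟨hi, hpre, hch⟩
      -- analyse step j
      have hcase := step_vertex_cases (hstep j hjn) u₁
      rcases hcase with he | ⟨heq, _⟩ | ⟨_, m, hm, hadj, hrc⟩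
      · exact hjch he
      · rw [← heq] at hjpre
        exact hplen hjpre
      · have hout := adj_out hadj hjpre hplen
        have hvj : vs j = u₂ := Subtype.ext (by rw [hout.2, ← hu₂x])
        have hij2 : i₂ ≤ j := by
          by_contra hlt
          push_neg at hlt
          exact hF2.2.2.2 j hlt hvj ⟨m, hm⟩
        -- phase analysis of u₁
        have good : ∀ i, i₁ + 1 ≤ i → i ≤ j → GoodT φ (Ls i u₁) := by
          intro i
          induction i with
          | zero => omega
          | succ i ih =>
            intro h1 h2
            by_cases hbase : i = i₁
            · subst hbase
              obtain ⟨m0, hm0⟩ := hF1.2.2.1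
              have hs := hstep i hF1.1
              have hdst : Ls (i+1) u₁ = (ts i).2.2 := by
                rw [← hF1.2.1]; exact hs.2.2.1
              rcases (phase_brd hφ hs.1 hm0).1 with hb | hb
              · exact Or.inl (by rw [hdst]; exact hb)
              · exact Or.inr (Or.inl (by rw [hdst]; exact hb))
            · have hin : i < n := by omega
              exact good_step hφ (hstep i hin) u₁ (ih (by omega) (by omega))
        have hgj : φ (Ls (j+1) u₁) = .rph 2 :=
          phase_rcv hφ hrc rfl (good j (by omega) le_rfl)
        have bad : ∀ i, j + 1 ≤ i → i ≤ n → φ (Ls i u₁) = .rph 2 := by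
          intro i
          induction i with
          | zero => omega
          | succ i ih =>
            intro h1 h2
            by_cases hbase : i = j
            · subst hbase; exact hgj
            · have hin : i < n := by omega
              exact bad_step hφ (hstep i hin) u₁ (ih (by omega) (by omega))
        have H2 : ∀ i, j ≤ i → i < n → vs i = u₁ → ∀ m', (ts i).2.1 ≠ Act.brd m' := by
          intro i hji hin hvi m' hm'
          have hij : i ≠ j := by
            intro h
            rw [h, hvj] at hvi
            exact hne12 hvi.symm
          have hb := bad i (by omega) (by omega)
          have hs := hstep i hin
          have hsrc : Ls i u₁ = (ts i).1 := by rw [← hvi]; exact hs.2.1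
          exact (phase_brd hφ hs.1 hm').2 (by rw [← hsrc]; exact hb)
        obtain ⟨L', hR, hI⟩ := sim P T n Ls vs ts h0 hstep (u₁ : List ℕ) x u₁ rfl hne j H1 H2
        have hroot : L' ⟨[], (delTree T ((u₁ : List ℕ) ++ [x]) hne).nil_mem⟩ = qf := by
          rw [hI _ (Or.inl hrootne)]
          have hr : delEmb T ((u₁ : List ℕ) ++ [x]) hne
              ⟨[], (delTree T ((u₁ : List ℕ) ++ [x]) hne).nil_mem⟩ = T.root :=
            Subtype.ext rfl
          rw [hr, hf]
        exact min_contra P qf T hmin ((u₁ : List ℕ) ++ [x]) hne hw ⟨L', hR, _, hroot⟩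
    · -- the subtree at u₂ never affects u₁: delete it outright
      have H1 : ∀ i < n, i < n → (u₁ : List ℕ) ++ [x] <+: (vs i : List ℕ) →
          Ls (i+1) u₁ = Ls i u₁ := by
        intro i hi _ hpre
        by_contra hch
        exact hex ⟨i, hi, hpre, hch⟩
      obtain ⟨L', hR, hI⟩ := sim P T n Ls vs ts h0 hstep (u₁ : List ℕ) x u₁ rfl hne n H1
        (fun i h1 h2 _ _ => absurd (lt_of_le_of_lt h1 h2) (lt_irrefl _))
      have hroot : L' ⟨[], (delTree T ((u₁ : List ℕ) ++ [x]) hne).nil_mem⟩ = qf := by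
        rw [hI _ (Or.inl hrootne)]
        have hr : delEmb T ((u₁ : List ℕ) ++ [x]) hne
            ⟨[], (delTree T ((u₁ : List ℕ) ++ [x]) hne).nil_mem⟩ = T.root :=
          Subtype.ext rfl
        rw [hr, hf]
      exact min_contra P qf T hmin ((u₁ : List ℕ) ++ [x]) hne hw ⟨L', hR, _, hroot⟩

end BN
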